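/- arXiv:1002.4570 — 3 statements merged into one kernel-verified Lean document; each statement's English description precedes it below -/
import Mathlib

section
/- Let D be a finite set of stations with positive weights w_j and service rates μ_j, and a finite family of neighbourhoods S_i ⊆ D with arrival rates λ_i ≥ 0. For a cluster C ⊆ D define W(C) = (1/|C|) · min over static policies π (with π(i) a probability vector supported on S_i ∩ C, and only neighbourhoods S_i ⊆ C contributing) of Σ_{j∈C} w_j (Σ_{i: S_i⊆C} λ_i π(i)_j − μ_j). Suppose A, B ⊆ D are clusters with W(A) = W(B) = v where v = max_{C⊆D, C≠∅} W(C). Then W(A ∪ B) = v and every neighbourhood S_i ⊆ A∪B with S_i ⊄ A and S_i ⊄ B has λ_i = 0. -/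
open Finset

/-- Restricted average drift on a cluster `C`: `(1/|C|)` times the infimum, over static
policies `π` (each `π i` a probability vector supported on `S i`), of
`∑_{j∈C} w j * (∑_{i : S i ⊆ C} lam i * π i j − μ j)`. -/
noncomputable def restrictedDrift {ι κ : Type*} [Fintype ι] [Fintype κ] [DecidableEq ι]
    (S : κ → Finset ι) (lam : κ → ℝ) (w μ : ι → ℝ) (C : Finset ι) : ℝ :=
  (C.card : ℝ)⁻¹ * sInf { v : ℝ | ∃ π : κ → ι → ℝ,
    (∀ i, (∀ j, 0 ≤ π i j) ∧ (∀ j, j ∉ S i → π i j = 0) ∧ (∑ j, π i j) = 1) ∧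
    v = ∑ j ∈ C, w j *
      ((∑ i ∈ Finset.univ.filter (fun i => S i ⊆ C), lam i * π i j) - μ j) }

/-- The value of a policy rearranged. -/
lemma value_rearrange {ι κ : Type*} [Fintype ι] [Fintype κ]
    (F : Finset κ) (C : Finset ι) (lam : κ → ℝ) (w μ : ι → ℝ) (π : κ → ι → ℝ) :
    ∑ j ∈ C, w j * ((∑ i ∈ F, lam i * π i j) - μ j)
      = (∑ i ∈ F, lam i * ∑ j ∈ C, w j * π i j) - ∑ j ∈ C, w j * μ j := by
  simp_rw [mul_sub, Finset.sum_sub_distrib, Finset.mul_sum]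
  rw [Finset.sum_comm]
  congr 1
  refine Finset.sum_congr rfl fun i _ => Finset.sum_congr rfl fun j _ => by ring

lemma restrictedDrift_eq {ι κ : Type*} [Fintype ι] [Fintype κ] [DecidableEq ι]
    (S : κ → Finset ι) (lam : κ → ℝ) (w μ : ι → ℝ)
    (hlam : ∀ i, 0 ≤ lam i) (hSne : ∀ i, (S i).Nonempty) (C : Finset ι) :
    restrictedDrift S lam w μ C = (C.card : ℝ)⁻¹ *
      ((∑ i ∈ Finset.univ.filter (fun i => S i ⊆ C), lam i * (S i).inf' (hSne i) w)
        - ∑ j ∈ C, w j * μ j) := by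
  classical
  unfold restrictedDrift
  congr 1
  apply IsLeast.csInf_eq
  constructor
  · choose g hg hgw using fun i => (S i).exists_mem_eq_inf' (hSne i) w
    refine ⟨fun i j => if j = g i then 1 else 0, fun i => ⟨?_, ?_, ?_⟩, ?_⟩
    · intro j; positivity
    · intro j hj
      simp only [ite_eq_right_iff]
      intro hje; exact absurd (hje ▸ hg i) hj
    · simp
    · rw [value_rearrange]
      congr 1
      refine Finset.sum_congr rfl fun i hi => ?_
      simp only [Finset.mem_filter] at hi
      congr 1
      rw [hgw i]
      simp_rw [mul_ite, mul_one, mul_zero]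
      rw [Finset.sum_ite_eq' C (g i) w]
      simp [hi.2 (hg i)]
  · rintro x ⟨π, hπ, rfl⟩
    rw [value_rearrange]
    gcongr with i hi
    · exact hlam i
    simp only [Finset.mem_filter] at hi
    have h1 : ∑ j ∈ C, π i j = 1 := by
      rw [← (hπ i).2.2]
      exact Finset.sum_subset (Finset.subset_univ C) fun j _ hj =>
        (hπ i).2.1 j (fun hjS => hj (hi.2 hjS))
    calc (S i).inf' (hSne i) w = (S i).inf' (hSne i) w * ∑ j ∈ C, π i j := by rw [h1, mul_one]
      _ = ∑ j ∈ C, (S i).inf' (hSne i) w * π i j := by rw [Finset.mul_sum]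
      _ ≤ ∑ j ∈ C, w j * π i j := by
          refine Finset.sum_le_sum fun j hj => ?_
          by_cases hjS : j ∈ S i
          · exact mul_le_mul_of_nonneg_right (Finset.inf'_le w hjS) ((hπ i).1 j)
          · rw [(hπ i).2.1 j hjS, mul_zero, mul_zero]

theorem union_of_maximizing_clusters {ι κ : Type*} [Fintype ι] [Fintype κ] [DecidableEq ι]
    (S : κ → Finset ι) (lam : κ → ℝ) (w μ : ι → ℝ)
    (hw : ∀ j, 0 < w j) (hμ : ∀ j, 0 < μ j) (hlam : ∀ i, 0 ≤ lam i)
    (hSne : ∀ i, (S i).Nonempty)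
    (A B : Finset ι) (hA : A.Nonempty) (hB : B.Nonempty) (v : ℝ)
    (hmax : ∀ C : Finset ι, C.Nonempty → restrictedDrift S lam w μ C ≤ v)
    (hAv : restrictedDrift S lam w μ A = v)
    (hBv : restrictedDrift S lam w μ B = v) :
    restrictedDrift S lam w μ (A ∪ B) = v ∧
      ∀ i, S i ⊆ A ∪ B → ¬ S i ⊆ A → ¬ S i ⊆ B → lam i = 0 := by
  classical
  set m : κ → ℝ := fun i => (S i).inf' (hSne i) w with hm
  have hmpos : ∀ i, 0 < m i := fun i => by
    obtain ⟨j, hj, hje⟩ := (S i).exists_mem_eq_inf' (hSne i) w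
    rw [hm]; simp only []; rw [hje]; exact hw j
  set h : Finset ι → ℝ := fun C =>
    (∑ i ∈ Finset.univ.filter (fun i => S i ⊆ C), lam i * m i) - ∑ j ∈ C, w j * μ j with hh
  have hformula : ∀ C, restrictedDrift S lam w μ C = (C.card : ℝ)⁻¹ * h C :=
    fun C => restrictedDrift_eq S lam w μ hlam hSne C
  have hval : ∀ C : Finset ι, C.Nonempty → restrictedDrift S lam w μ C = v →
      h C = C.card * v := by
    intro C hC hCv
    have hcard : (C.card : ℝ) ≠ 0 := Nat.cast_ne_zero.mpr (Finset.card_ne_zero.mpr hC)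
    rw [hformula] at hCv
    field_simp at hCv
    linarith [hCv]
  have hAh : h A = A.card * v := hval A hA hAv
  have hBh : h B = B.card * v := hval B hB hBv
  have hub : ∀ C : Finset ι, C.Nonempty → h C ≤ C.card * v := by
    intro C hC
    have hcard : (0:ℝ) < C.card := Nat.cast_pos.mpr (Finset.card_pos.mpr hC)
    have := hmax C hC
    rw [hformula] at this
    rw [inv_mul_le_iff₀ hcard] at this
    linarith
  -- A ∩ B bound (works also when empty)
  have hIub : h (A ∩ B) ≤ (A ∩ B).card * v := by
    rcases (A ∩ B).eq_empty_or_nonempty with hI | hI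
    · rw [hI]
      have hf : Finset.univ.filter (fun i => S i ⊆ (∅ : Finset ι)) = ∅ := by
        ext i
        simp only [Finset.mem_filter, Finset.mem_univ, true_and, Finset.notMem_empty,
          iff_false, Finset.subset_empty]
        exact (hSne i).ne_empty
      simp only [hh, hf, Finset.sum_empty, Finset.card_empty, Nat.cast_zero, zero_mul,
        sub_zero, le_refl]
    · exact hub _ hI
  -- the cross set
  set X : Finset κ := Finset.univ.filter
      (fun i => S i ⊆ A ∪ B ∧ ¬ S i ⊆ A ∧ ¬ S i ⊆ B) with hX
  set FA := Finset.univ.filter (fun i => S i ⊆ A) with hFA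
  set FB := Finset.univ.filter (fun i => S i ⊆ B) with hFB
  set FU := Finset.univ.filter (fun i => S i ⊆ A ∪ B) with hFU
  set FI := Finset.univ.filter (fun i => S i ⊆ A ∩ B) with hFI
  have hsub : FA ∪ FB ⊆ FU := by
    intro i hi
    simp only [hFA, hFB, hFU, Finset.mem_union, Finset.mem_filter, Finset.mem_univ,
      true_and] at hi ⊢
    rcases hi with hi | hi
    · exact hi.trans Finset.subset_union_left
    · exact hi.trans Finset.subset_union_right
  have hXeq : X = FU \ (FA ∪ FB) := by
    ext i
    simp only [hX, hFA, hFB, hFU, Finset.mem_sdiff, Finset.mem_union, Finset.mem_filter,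
      Finset.mem_univ, true_and]
    tauto
  have hAB : FA ∩ FB = FI := by
    ext i
    simp only [hFA, hFB, hFI, Finset.mem_inter, Finset.mem_filter, Finset.mem_univ, true_and,
      Finset.subset_inter_iff]
  have hsum1 : ∑ i ∈ FU, lam i * m i
      = (∑ i ∈ FA, lam i * m i) + (∑ i ∈ FB, lam i * m i) - (∑ i ∈ FI, lam i * m i)
        + ∑ i ∈ X, lam i * m i := by
    have h1 : (∑ i ∈ FU \ (FA ∪ FB), lam i * m i) + ∑ i ∈ FA ∪ FB, lam i * m i
        = ∑ i ∈ FU, lam i * m i := Finset.sum_sdiff hsub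
    have h2 : (∑ i ∈ FA ∪ FB, lam i * m i) + ∑ i ∈ FA ∩ FB, lam i * m i
        = (∑ i ∈ FA, lam i * m i) + ∑ i ∈ FB, lam i * m i :=
      Finset.sum_union_inter
    rw [hXeq]
    rw [hAB] at h2
    linarith
  have hsum2 : (∑ j ∈ A ∪ B, w j * μ j) + ∑ j ∈ A ∩ B, w j * μ j
      = (∑ j ∈ A, w j * μ j) + ∑ j ∈ B, w j * μ j := Finset.sum_union_inter
  have hkey : h (A ∪ B) + h (A ∩ B) = h A + h B + ∑ i ∈ X, lam i * m i := by
    simp only [hh]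
    rw [hsum1]
    linarith
  have hcards : ((A ∪ B).card : ℝ) + (A ∩ B).card = A.card + B.card := by
    have := Finset.card_union_add_card_inter A B
    exact_mod_cast congrArg (Nat.cast : ℕ → ℝ) this
  have hXnonneg : (0:ℝ) ≤ ∑ i ∈ X, lam i * m i :=
    Finset.sum_nonneg fun i _ => mul_nonneg (hlam i) (hmpos i).le
  have hUub : h (A ∪ B) ≤ (A ∪ B).card * v := hub _ (hA.mono Finset.subset_union_left)
  have hcv : ((A ∪ B).card : ℝ) * v + ((A ∩ B).card : ℝ) * v
      = (A.card : ℝ) * v + (B.card : ℝ) * v := by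
    have := congrArg (fun x : ℝ => x * v) hcards
    simpa [add_mul] using this
  have hXzero : ∑ i ∈ X, lam i * m i = 0 := by
    linarith [hkey, hIub, hUub, hAh, hBh, hcv]
  have hUeq : h (A ∪ B) = (A ∪ B).card * v := by
    linarith [hkey, hIub, hUub, hAh, hBh, hcv, hXnonneg]
  constructor
  · rw [hformula, hUeq]
    have hcard : ((A ∪ B).card : ℝ) ≠ 0 :=
      Nat.cast_ne_zero.mpr (Finset.card_ne_zero.mpr (hA.mono Finset.subset_union_left))
    field_simp
  · intro i hi1 hi2 hi3
    have hiX : i ∈ X := by simp [hX, hi1, hi2, hi3]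
    have := (Finset.sum_eq_zero_iff_of_nonneg
      (fun i _ => mul_nonneg (hlam i) (hmpos i).le)).mp hXzero i hiX
    rcases mul_eq_zero.mp this with h0 | h0
    · exact h0
    · exact absurd h0 (hmpos i).ne'
end

section
/- (One-step monotonicity of JLW routing) Let C be a finite set with weights w_j > 0 and let x, z : C → ℤ with x_j ≤ z_j for all j. Fix a nonempty neighbourhood S ⊆ C. Let j ∈ S minimize w_j x_j over S and let l ∈ S minimize w_l z_l over S, where the choices are coupled so that if w_j z_j = w_j x_j then l = j is chosen. Then x + e_j ≤ z + e_l componentwise. -/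
open Finset

theorem jlw_one_step_monotone {ι : Type*} [DecidableEq ι]
    (w : ι → ℝ) (hw : ∀ j, 0 < w j)
    (x z : ι → ℤ) (hxz : ∀ r, x r ≤ z r)
    (S : Finset ι) (hS : S.Nonempty)
    (j l : ι) (hj : j ∈ S) (hl : l ∈ S)
    (hjmin : ∀ r ∈ S, w j * (x j : ℝ) ≤ w r * (x r : ℝ))
    (hlmin : ∀ r ∈ S, w l * (z l : ℝ) ≤ w r * (z r : ℝ))
    (hcouple : w j * (z j : ℝ) = w j * (x j : ℝ) → l = j) :
    ∀ r, x r + (Pi.single j (1 : ℤ) : ι → ℤ) r ≤ z r + (Pi.single l (1 : ℤ) : ι → ℤ) r := by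
  intro r
  by_cases hrj : r = j
  · subst hrj
    by_cases hlr : l = r
    · subst hlr; simp [Pi.single_eq_same]; exact hxz l
    · rw [Pi.single_eq_same, Pi.single_eq_of_ne (Ne.symm hlr)]
      have hne : (x r : ℤ) ≠ z r := by
        intro h
        exact hlr (hcouple (by rw [h]))
      have := hxz r
      omega
  · rw [Pi.single_eq_of_ne hrj]
    have h1 : (Pi.single l (1 : ℤ) : ι → ℤ) r ≥ 0 := by
      by_cases hrl : r = l
      · subst hrl; simp
      · rw [Pi.single_eq_of_ne hrl]
    have := hxz r
    omega
end

section
/- (Monotonicity under extra arrivals) Let C be a finite set with weights w_j > 0. Consider two processes ξ(n), ζ(n) on ℤ^C driven by the same sequence of events: each event is either a departure at a fixed station (subtract e_j from both), a common arrival at a neighbourhood S ⊆ C routed by JLW in each process with the coupled tie-breaking rule, or an extra arrival routed by JLW only in ζ. If ξ(0) = ζ(0), then ξ(n) ≤ ζ(n) componentwise for all n. -/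
open Finset

theorem jlw_monotone_under_extra_arrivals {ι : Type*} [DecidableEq ι]
    (w : ι → ℝ) (hw : ∀ j, 0 < w j)
    (ξ ζ : ℕ → ι → ℤ) (h0 : ξ 0 = ζ 0)
    (hstep : ∀ n,
      -- departure at some station, affecting both processes
      (∃ j, ξ (n + 1) = ξ n - Pi.single j 1 ∧ ζ (n + 1) = ζ n - Pi.single j 1) ∨
      -- common arrival at a neighbourhood S, routed by JLW in each process,
      -- with the coupled tie-breaking rule
      (∃ (S : Finset ι) (j l : ι), S.Nonempty ∧ j ∈ S ∧ l ∈ S ∧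
        (∀ r ∈ S, w j * (ξ n j : ℝ) ≤ w r * (ξ n r : ℝ)) ∧
        (∀ r ∈ S, w l * (ζ n l : ℝ) ≤ w r * (ζ n r : ℝ)) ∧
        (w j * (ζ n j : ℝ) = w j * (ξ n j : ℝ) → l = j) ∧
        ξ (n + 1) = ξ n + Pi.single j 1 ∧ ζ (n + 1) = ζ n + Pi.single l 1) ∨
      -- extra arrival, routed by JLW only in ζ
      (∃ (S : Finset ι) (l : ι), l ∈ S ∧
        (∀ r ∈ S, w l * (ζ n l : ℝ) ≤ w r * (ζ n r : ℝ)) ∧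
        ξ (n + 1) = ξ n ∧ ζ (n + 1) = ζ n + Pi.single l 1)) :
    ∀ n r, ξ n r ≤ ζ n r := by
  intro n
  induction n with
  | zero => intro r; rw [h0]
  | succ n ih =>
    rcases hstep n with ⟨j, hx, hz⟩ |
      ⟨S, j, l, _, _, _, _, _, htie, hx, hz⟩ | ⟨S, l, _, _, hx, hz⟩
    · intro r
      rw [hx, hz]
      simpa using ih r
    · intro r
      rw [hx, hz]
      simp only [Pi.add_apply, Pi.single_apply]
      by_cases hrj : r = j <;> by_cases hrl : r = l
      · rw [if_pos hrj, if_pos hrl]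
        have := ih r; omega
      · subst hrj
        rw [if_pos rfl, if_neg hrl]
        have hlt : ξ n r < ζ n r :=
          lt_of_le_of_ne (ih r) (fun h => hrl ((htie (by rw [h])).symm))
        omega
      · rw [if_neg hrj, if_pos hrl]
        have := ih r; omega
      · rw [if_neg hrj, if_neg hrl]
        have := ih r; omega
    · intro r
      rw [hx, hz]
      simp only [Pi.add_apply, Pi.single_apply]
      by_cases hrl : r = l
      · rw [if_pos hrl]; have := ih r; omega
      · rw [if_neg hrl]; have := ih r; omega
end
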